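/- For the half-graph H_s with s ≥ 2, the failed zero forcing number is F(H_s) = 2s − 3; also F(H_1) = 0. -/

import Mathlib

open SimpleGraph

variable {V : Type*}

/-- One step of the standard zero forcing color-change rule: a blue vertex `u`
whose unique white neighbor is `v` forces `v` to become blue. -/
def zfStep (G : SimpleGraph V) (B : Set V) : Set V :=
  B ∪ {v | v ∉ B ∧ ∃ u ∈ B, G.Adj u v ∧ ∀ w, G.Adj u w → w ∉ B → w = v}

/-- `S` is a zero forcing set: iterating the standard color-change rule from `S`
eventually colors every vertex blue. -/
def IsZeroForcingSet (G : SimpleGraph V) (S : Set V) : Prop :=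
  (⋃ n, (zfStep G)^[n] S) = Set.univ

/-- The failed zero forcing number `F(G)`: the maximum cardinality of a set that
is not a zero forcing set. -/
noncomputable def failedZF (G : SimpleGraph V) : ℕ :=
  sSup {n | ∃ S : Set V, ¬ IsZeroForcingSet G S ∧ S.ncard = n}

/-- The zero forcing number `Z(G)`. -/
noncomputable def zfNumber (G : SimpleGraph V) : ℕ :=
  sInf {n | ∃ S : Set V, IsZeroForcingSet G S ∧ S.ncard = n}

/-- One step of the positive semidefinite color-change rule. -/
def psdStep (G : SimpleGraph V) (B : Set V) : Set V :=
  B ∪ {v | ∃ (hv : v ∉ B), ∃ u ∈ B, G.Adj u v ∧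
        ∀ (w : V) (hw : w ∉ B), G.Adj u w →
          (G.induce {x | x ∉ B}).Reachable ⟨w, hw⟩ ⟨v, hv⟩ → w = v}

/-- `S` is a positive semidefinite zero forcing set. -/
def IsPSDZeroForcingSet (G : SimpleGraph V) (S : Set V) : Prop :=
  (⋃ n, (psdStep G)^[n] S) = Set.univ

/-- The failed positive semidefinite zero forcing number `F₊(G)`. -/
noncomputable def failedPSD (G : SimpleGraph V) : ℕ :=
  sSup {n | ∃ S : Set V, ¬ IsPSDZeroForcingSet G S ∧ S.ncard = n}

/-- The positive semidefinite zero forcing number `Z₊(G)`. -/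
noncomputable def psdZFNumber (G : SimpleGraph V) : ℕ :=
  sInf {n | ∃ S : Set V, IsPSDZeroForcingSet G S ∧ S.ncard = n}

/-- The half-graph `H_s`: bipartite on `v₁, …, v_s` and `v_{s+1}, …, v_{2s}`,
where `vᵢ` (left) is adjacent to `v_{s+j}` (right) iff `i ≤ j`. -/
def halfGraph (s : ℕ) : SimpleGraph (Fin s ⊕ Fin s) where
  Adj a b := match a, b with
    | .inl i, .inr j => i.val ≤ j.val
    | .inr j, .inl i => i.val ≤ j.val
    | _, _ => False
  symm := ⟨by rintro (i | i) (j | j) h <;> exact h⟩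
  loopless := ⟨by rintro (i | i) h <;> exact h⟩


lemma zfStep_subset (G : SimpleGraph V) (B : Set V) : B ⊆ zfStep G B :=
  Set.subset_union_left

lemma not_zfs_of_stalled (G : SimpleGraph V) (B : Set V) (h : zfStep G B = B)
    (hne : B ≠ Set.univ) : ¬ IsZeroForcingSet G B := by
  intro hz
  apply hne
  rw [IsZeroForcingSet] at hz
  rw [← hz]
  ext x
  simp [Function.iterate_fixed h]

lemma zfStep_eq_univ (G : SimpleGraph V) (B : Set V) (hnb : ∀ v : V, ∃ u, G.Adj u v)
    (h : ∀ x y : V, x ∉ B → y ∉ B → x = y) : zfStep G B = Set.univ := by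
  ext v
  simp only [zfStep, Set.mem_union, Set.mem_setOf_eq, Set.mem_univ, iff_true]
  by_cases hv : v ∈ B
  · exact Or.inl hv
  · refine Or.inr ⟨hv, ?_⟩
    obtain ⟨u, hu⟩ := hnb v
    have hub : u ∈ B := by
      by_contra h'
      exact hu.ne (h u v h' hv)
    exact ⟨u, hub, hu, fun w _ hw => h w v hw hv⟩

lemma hg_nbr (s : ℕ) : ∀ v : Fin s ⊕ Fin s, ∃ u, (halfGraph s).Adj u v := by
  rintro (i | i)
  · exact ⟨.inr i, le_refl i.val⟩
  · exact ⟨.inl i, le_refl i.val⟩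

lemma zfs_of_iterate (G : SimpleGraph V) (B : Set V) (n : ℕ)
    (h : (zfStep G)^[n] B = Set.univ) : IsZeroForcingSet G B := by
  apply Set.eq_univ_of_univ_subset
  rw [← h]
  exact Set.subset_iUnion (fun n => (zfStep G)^[n] B) n

lemma forceL (s : ℕ) (B : Set (Fin s ⊕ Fin s)) (i j : Fin s) (hij : i.val < j.val)
    (hW : ∀ x, x ∉ B ↔ x = Sum.inl i ∨ x = Sum.inl j) :
    ∃ v, v ∉ B ∧ v ∈ zfStep (halfGraph s) B := by
  have hvB : (Sum.inl i : Fin s ⊕ Fin s) ∉ B := (hW _).2 (Or.inl rfl)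
  refine ⟨Sum.inl i, hvB, Set.mem_union_right _ ?_⟩
  have huB : (Sum.inr i : Fin s ⊕ Fin s) ∈ B := by
    by_contra h'
    rcases (hW _).1 h' with h'' | h'' <;> simp at h''
  refine ⟨hvB, Sum.inr i, huB, le_refl i.val, ?_⟩
  intro w hadj hw
  rcases (hW w).1 hw with rfl | rfl
  · rfl
  · exact absurd (show j.val ≤ i.val from hadj) (by omega)

lemma forceR (s : ℕ) (B : Set (Fin s ⊕ Fin s)) (i j : Fin s) (hij : i.val < j.val)
    (hW : ∀ x, x ∉ B ↔ x = Sum.inr i ∨ x = Sum.inr j) :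
    ∃ v, v ∉ B ∧ v ∈ zfStep (halfGraph s) B := by
  have hvB : (Sum.inr j : Fin s ⊕ Fin s) ∉ B := (hW _).2 (Or.inr rfl)
  refine ⟨Sum.inr j, hvB, Set.mem_union_right _ ?_⟩
  have huB : (Sum.inl j : Fin s ⊕ Fin s) ∈ B := by
    by_contra h'
    rcases (hW _).1 h' with h'' | h'' <;> simp at h''
  refine ⟨hvB, Sum.inl j, huB, le_refl j.val, ?_⟩
  intro w hadj hw
  rcases (hW w).1 hw with rfl | rfl
  · exact absurd (show j.val ≤ i.val from hadj) (by omega)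
  · rfl

lemma forceM (s : ℕ) (hs : 2 ≤ s) (B : Set (Fin s ⊕ Fin s)) (i j : Fin s)
    (hW : ∀ x, x ∉ B ↔ x = Sum.inl i ∨ x = Sum.inr j) :
    ∃ v, v ∉ B ∧ v ∈ zfStep (halfGraph s) B := by
  have hiB : (Sum.inl i : Fin s ⊕ Fin s) ∉ B := (hW _).2 (Or.inl rfl)
  have hjB : (Sum.inr j : Fin s ⊕ Fin s) ∉ B := (hW _).2 (Or.inr rfl)
  rcases lt_trichotomy i.val j.val with hlt | heq | hgt
  · -- u = inl j forces v = inr j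
    refine ⟨Sum.inr j, hjB, Set.mem_union_right _ ?_⟩
    have huB : (Sum.inl j : Fin s ⊕ Fin s) ∈ B := by
      by_contra h'
      rcases (hW _).1 h' with h'' | h''
      · rw [Sum.inl.injEq, Fin.ext_iff] at h''; omega
      · simp at h''
    refine ⟨hjB, Sum.inl j, huB, le_refl j.val, ?_⟩
    intro w hadj hw
    rcases (hW w).1 hw with rfl | rfl
    · exact absurd hadj not_false
    · rfl
  · rcases Nat.eq_zero_or_pos i.val with h0 | h0
    · -- i = j = 0 : u = inr (s-1) forces v = inl i
      refine ⟨Sum.inl i, hiB, Set.mem_union_right _ ?_⟩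
      have huB : (Sum.inr (⟨s - 1, by omega⟩ : Fin s) : Fin s ⊕ Fin s) ∈ B := by
        by_contra h'
        rcases (hW _).1 h' with h'' | h''
        · simp at h''
        · rw [Sum.inr.injEq, Fin.ext_iff] at h''; simp at h''; omega
      refine ⟨hiB, Sum.inr ⟨s - 1, by omega⟩, huB, show i.val ≤ s - 1 by omega, ?_⟩
      intro w hadj hw
      rcases (hW w).1 hw with rfl | rfl
      · rfl
      · exact absurd hadj not_false
    · -- i = j ≠ 0 : u = inl 0 forces v = inr j
      refine ⟨Sum.inr j, hjB, Set.mem_union_right _ ?_⟩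
      have huB : (Sum.inl (⟨0, by omega⟩ : Fin s) : Fin s ⊕ Fin s) ∈ B := by
        by_contra h'
        rcases (hW _).1 h' with h'' | h''
        · rw [Sum.inl.injEq, Fin.ext_iff] at h''; simp at h''; omega
        · simp at h''
      refine ⟨hjB, Sum.inl ⟨0, by omega⟩, huB, show (0:ℕ) ≤ j.val from Nat.zero_le _, ?_⟩
      intro w hadj hw
      rcases (hW w).1 hw with rfl | rfl
      · exact absurd hadj not_false
      · rfl
  · -- j < i : u = inr i forces v = inl i
    refine ⟨Sum.inl i, hiB, Set.mem_union_right _ ?_⟩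
    have huB : (Sum.inr i : Fin s ⊕ Fin s) ∈ B := by
      by_contra h'
      rcases (hW _).1 h' with h'' | h''
      · simp at h''
      · rw [Sum.inr.injEq, Fin.ext_iff] at h''; omega
    refine ⟨hiB, Sum.inr i, huB, le_refl i.val, ?_⟩
    intro w hadj hw
    rcases (hW w).1 hw with rfl | rfl
    · rfl
    · exact absurd hadj not_false

lemma force_one (s : ℕ) (hs : 2 ≤ s) (B : Set (Fin s ⊕ Fin s)) (a b : Fin s ⊕ Fin s)
    (hab : a ≠ b) (hW : ∀ x, x ∉ B ↔ x = a ∨ x = b) :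
    ∃ v, v ∉ B ∧ v ∈ zfStep (halfGraph s) B := by
  rcases a with i | i <;> rcases b with j | j
  · rcases lt_trichotomy i.val j.val with h | h | h
    · exact forceL s B i j h hW
    · exact absurd (by rw [Fin.ext_iff.2 h]) hab
    · exact forceL s B j i h fun x => (hW x).trans or_comm
  · exact forceM s hs B i j hW
  · exact forceM s hs B j i fun x => (hW x).trans or_comm
  · rcases lt_trichotomy i.val j.val with h | h | h
    · exact forceR s B i j h hW
    · exact absurd (by rw [Fin.ext_iff.2 h]) hab
    · exact forceR s B j i h fun x => (hW x).trans or_comm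

lemma zfs_of_two (s : ℕ) (hs : 2 ≤ s) (B : Set (Fin s ⊕ Fin s)) (h : Bᶜ.ncard ≤ 2) :
    IsZeroForcingSet (halfGraph s) B := by
  by_cases hone : ∀ x y : Fin s ⊕ Fin s, x ∉ B → y ∉ B → x = y
  · exact zfs_of_iterate _ _ 1 (zfStep_eq_univ _ _ (hg_nbr s) hone)
  · push_neg at hone
    obtain ⟨a, b, ha, hb, hab⟩ := hone
    have hW : ∀ x, x ∉ B ↔ x = a ∨ x = b := by
      intro x
      constructor
      · intro hx
        by_contra hc
        push_neg at hc
        have hsub : ({a, b, x} : Set (Fin s ⊕ Fin s)) ⊆ Bᶜ := by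
          rintro y (rfl | rfl | rfl) <;> assumption
        have h3 : ({a, b, x} : Set (Fin s ⊕ Fin s)).ncard = 3 := by
          rw [Set.ncard_insert_of_notMem (by simp [hab, Ne.symm hc.1]),
            Set.ncard_pair (Ne.symm hc.2)]
        have := Set.ncard_le_ncard hsub (Set.toFinite _)
        omega
      · rintro (rfl | rfl) <;> assumption
    obtain ⟨v, hv, hvz⟩ := force_one s hs B a b hab hW
    apply zfs_of_iterate _ _ 2
    show zfStep (halfGraph s) (zfStep (halfGraph s) B) = Set.univ
    apply zfStep_eq_univ _ _ (hg_nbr s)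
    intro x y hx hy
    have hx' := (hW x).1 fun hxB => hx (zfStep_subset _ _ hxB)
    have hy' := (hW y).1 fun hyB => hy (zfStep_subset _ _ hyB)
    have hv' := (hW v).1 hv
    rcases hx' with rfl | rfl <;> rcases hy' with rfl | rfl <;>
      rcases hv' with rfl | rfl <;> first | rfl | exact absurd hvz hx | exact absurd hvz hy

lemma card_V (s : ℕ) : Nat.card (Fin s ⊕ Fin s) = 2 * s := by
  simp [Nat.card_sum]; ring

lemma failed_set (s : ℕ) (hs : 2 ≤ s) :
    ∃ S : Set (Fin s ⊕ Fin s), ¬ IsZeroForcingSet (halfGraph s) S ∧ S.ncard = 2 * s - 3 := by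
  set a : Fin s ⊕ Fin s := Sum.inl ⟨s - 1, by omega⟩ with ha
  set b : Fin s ⊕ Fin s := Sum.inr ⟨s - 2, by omega⟩ with hb
  set c : Fin s ⊕ Fin s := Sum.inr ⟨s - 1, by omega⟩ with hc
  set W : Set (Fin s ⊕ Fin s) := {a, b, c} with hWdef
  refine ⟨Wᶜ, not_zfs_of_stalled _ _ ?_ ?_, ?_⟩
  · -- stalled
    apply Set.Subset.antisymm _ (zfStep_subset _ _)
    rintro v (hv | ⟨hvB, u, huB, hadj, huniq⟩)
    · exact hv
    · exfalso
      have hvW : v ∈ W := Set.not_notMem.1 hvB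
      rcases u with k | k
      · -- blue left vertex has two white right neighbors
        have hk : k.val ≠ s - 1 := by
          intro hkk
          exact huB (by simp [hWdef, ha, Fin.ext_iff, hkk])
        have h1 : (Sum.inr (⟨s - 2, by omega⟩ : Fin s) : Fin s ⊕ Fin s) = v :=
          huniq _ (show k.val ≤ s - 2 by omega)
            (Set.not_notMem.2 (by simp [hWdef, hb]))
        have h2 : (Sum.inr (⟨s - 1, by omega⟩ : Fin s) : Fin s ⊕ Fin s) = v :=
          huniq _ (show k.val ≤ s - 1 by omega)
            (Set.not_notMem.2 (by simp [hWdef, hc]))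
        rw [← h2] at h1
        rw [Sum.inr.injEq, Fin.ext_iff] at h1
        simp at h1
        omega
      · -- blue right vertex has no white neighbors
        have hk : k.val ≠ s - 1 := by
          intro hkk
          exact huB (by simp [hWdef, hc, Fin.ext_iff, hkk])
        rcases hvW with rfl | rfl | rfl
        · have : s - 1 ≤ k.val := hadj
          omega
        · exact hadj
        · exact hadj
  · -- not univ
    intro h
    have : a ∈ Wᶜ := h ▸ Set.mem_univ a
    exact this (by simp [hWdef])
  · -- cardinality
    have hW3 : W.ncard = 3 := by
      rw [hWdef, Set.ncard_insert_of_notMem (by simp [ha, hb, hc]),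
        Set.ncard_pair (by simp [hb, hc, Fin.ext_iff]; omega)]
    have := Set.ncard_add_ncard_compl W
    rw [hW3, card_V s] at this
    omega

theorem failedZF_halfGraph :
    failedZF (halfGraph 1) = 0 ∧ ∀ s : ℕ, 2 ≤ s → failedZF (halfGraph s) = 2 * s - 3 := by
  constructor
  · -- H₁
    have hset : {n | ∃ S : Set (Fin 1 ⊕ Fin 1), ¬ IsZeroForcingSet (halfGraph 1) S ∧
        S.ncard = n} = {0} := by
      ext n
      simp only [Set.mem_setOf_eq, Set.mem_singleton_iff]
      constructor
      · rintro ⟨S, hS, rfl⟩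
        rw [Set.ncard_eq_zero (Set.toFinite _)]
        by_contra hne
        obtain ⟨v, hv⟩ := Set.nonempty_iff_ne_empty.2 hne
        apply hS
        apply zfs_of_iterate _ _ 1
        apply zfStep_eq_univ _ _ (hg_nbr 1)
        intro x y hx hy
        by_contra hxy
        have hall : ∀ z : Fin 1 ⊕ Fin 1, z = x ∨ z = y := by
          rcases x with i | i <;> rcases y with j | j <;>
            rintro (k | k) <;> simp_all [Fin.ext_iff]
        rcases hall v with rfl | rfl
        · exact hx hv
        · exact hy hv
      · rintro rfl
        refine ⟨∅, ?_, Set.ncard_empty _⟩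
        apply not_zfs_of_stalled
        · ext v
          simp [zfStep]
        · intro h
          exact (h ▸ Set.mem_univ (Sum.inl 0) : (Sum.inl 0 : Fin 1 ⊕ Fin 1) ∈ (∅ : Set _))
    rw [failedZF, hset, csSup_singleton]
  · intro s hs
    rw [failedZF]
    apply le_antisymm
    · apply csSup_le
      · obtain ⟨S, h1, h2⟩ := failed_set s hs
        exact ⟨2 * s - 3, S, h1, h2⟩
      · rintro n ⟨S, hS, rfl⟩
        by_contra hlt
        push_neg at hlt
        apply hS
        apply zfs_of_two s hs
        have := Set.ncard_add_ncard_compl S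
        rw [card_V s] at this
        omega
    · apply le_csSup
      · refine ⟨2 * s, ?_⟩
        rintro n ⟨S, _, rfl⟩
        have := Set.ncard_add_ncard_compl S
        rw [card_V s] at this
        omega
      · obtain ⟨S, h1, h2⟩ := failed_set s hs
        exact ⟨S, h1, h2⟩
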